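/- Let Q denote the standard Gaussian tail function. Then Q((log(1 − Q(t)) − log(Q(t)) − 2t²)/(2t)) tends to 1 as t → +∞. (This is Proposition 2, part 2: writing P_e = Q(t), μ = 2t², σ = 2t, the probability P'_r = Q((log(1 − P_e) − log(P_e) − μ)/σ) that the path does not split and the bit is correctly decoded tends to 1 as P_e → 0⁺.) -/

import Mathlib

open Real Filter Topology MeasureTheory Set

/-- The standard Gaussian tail function `Q(x) = (1/√(2π)) ∫_x^∞ e^{−t²/2} dt`. -/
noncomputable def gaussQ (x : ℝ) : ℝ :=
  (1 / Real.sqrt (2 * Real.pi)) * ∫ t in Set.Ioi x, Real.exp (-t ^ 2 / 2)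

lemma integrable_gaussK : Integrable (fun t : ℝ => Real.exp (-t ^ 2 / 2)) := by
  have h := integrable_exp_neg_mul_sq (by norm_num : (0:ℝ) < 1/2)
  have : (fun x : ℝ => Real.exp (-(1/2) * x ^ 2)) = fun t : ℝ => Real.exp (-t ^ 2 / 2) := by
    funext x; ring_nf
  rwa [this] at h

lemma integral_gaussK : (∫ t : ℝ, Real.exp (-t ^ 2 / 2)) = Real.sqrt (2 * Real.pi) := by
  have h := integral_gaussian (1/2 : ℝ)
  have e1 : (fun x : ℝ => Real.exp (-(1/2) * x ^ 2)) = fun t : ℝ => Real.exp (-t ^ 2 / 2) := by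
    funext x; ring_nf
  rw [e1] at h
  rw [h]
  congr 1
  ring

lemma sqrt_two_pi_pos : 0 < Real.sqrt (2 * Real.pi) :=
  Real.sqrt_pos.2 (by positivity)

lemma gaussQ_eq (x : ℝ) :
    gaussQ x = 1 - (1 / Real.sqrt (2 * Real.pi)) * ∫ t in Set.Iic x, Real.exp (-t ^ 2 / 2) := by
  have h := MeasureTheory.integral_add_compl (measurableSet_Iic (a := x)) integrable_gaussK
  rw [compl_Iic] at h
  have : (∫ t in Set.Ioi x, Real.exp (-t ^ 2 / 2))
      = Real.sqrt (2 * Real.pi) - ∫ t in Set.Iic x, Real.exp (-t ^ 2 / 2) := by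
    rw [← integral_gaussK]; linarith [h]
  rw [gaussQ, this]
  field_simp

lemma integral_Iic_pos (x : ℝ) : 0 < ∫ t in Set.Iic x, Real.exp (-t ^ 2 / 2) := by
  rw [setIntegral_pos_iff_support_of_nonneg_ae
    (Filter.Eventually.of_forall fun t => (Real.exp_pos _).le)
    integrable_gaussK.integrableOn]
  have hs : Function.support (fun t : ℝ => Real.exp (-t ^ 2 / 2)) = Set.univ := by
    ext t; simp [Function.mem_support, (Real.exp_pos _).ne']
  rw [hs, Set.univ_inter]
  simp

lemma integral_Ioi_pos (x : ℝ) : 0 < ∫ t in Set.Ioi x, Real.exp (-t ^ 2 / 2) := by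
  rw [setIntegral_pos_iff_support_of_nonneg_ae
    (Filter.Eventually.of_forall fun t => (Real.exp_pos _).le)
    integrable_gaussK.integrableOn]
  have hs : Function.support (fun t : ℝ => Real.exp (-t ^ 2 / 2)) = Set.univ := by
    ext t; simp [Function.mem_support, (Real.exp_pos _).ne']
  rw [hs, Set.univ_inter]
  simp

lemma gaussQ_pos (x : ℝ) : 0 < gaussQ x :=
  mul_pos (by positivity) (integral_Ioi_pos x)

lemma gaussQ_lt_one (x : ℝ) : gaussQ x < 1 := by
  rw [gaussQ_eq]
  have := integral_Iic_pos x
  have h2 : 0 < (1 / Real.sqrt (2 * Real.pi)) * ∫ t in Set.Iic x, Real.exp (-t ^ 2 / 2) :=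
    mul_pos (by positivity) this
  linarith

lemma gaussQ_lower (t : ℝ) (ht : 0 ≤ t) :
    (1 / Real.sqrt (2 * Real.pi)) * Real.exp (-(t + 1) ^ 2 / 2) ≤ gaussQ t := by
  have h1 : Real.exp (-(t + 1) ^ 2 / 2) ≤ ∫ s in Set.Ioc t (t + 1), Real.exp (-s ^ 2 / 2) := by
    have hconst : (∫ _ in Set.Ioc t (t + 1), Real.exp (-(t + 1) ^ 2 / 2))
        = Real.exp (-(t + 1) ^ 2 / 2) := by
      rw [setIntegral_const]
      rw [measureReal_def, Real.volume_Ioc]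
      simp
    rw [← hconst]
    refine setIntegral_mono_on (integrableOn_const ?_)
      integrable_gaussK.integrableOn measurableSet_Ioc ?_
    · rw [Real.volume_Ioc]; exact ENNReal.ofReal_ne_top
    · intro s hs
      have hs1 : t < s := hs.1
      have hs2 : s ≤ t + 1 := hs.2
      have : s ^ 2 ≤ (t + 1) ^ 2 := by nlinarith
      apply Real.exp_le_exp.2
      linarith
  have h2 : (∫ s in Set.Ioc t (t + 1), Real.exp (-s ^ 2 / 2))
      ≤ ∫ s in Set.Ioi t, Real.exp (-s ^ 2 / 2) := by
    refine setIntegral_mono_set integrable_gaussK.integrableOn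
      (Filter.Eventually.of_forall fun s => (Real.exp_pos _).le)
      (HasSubset.Subset.eventuallyLE Set.Ioc_subset_Ioi_self)
  rw [gaussQ]
  have hc : (0:ℝ) < 1 / Real.sqrt (2 * Real.pi) := by positivity
  nlinarith [h1.trans h2]

lemma gaussQ_tendsto_one_atBot : Tendsto gaussQ atBot (𝓝 1) := by
  have key : Tendsto (fun x : ℝ => ∫ t in Set.Iic x, Real.exp (-t ^ 2 / 2)) atBot (𝓝 0) := by
    apply tendsto_of_tendsto_of_tendsto_of_le_of_le' (g := fun _ : ℝ => (0:ℝ))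
      (h := fun x : ℝ => Real.exp x) tendsto_const_nhds Real.tendsto_exp_atBot
    · exact Filter.Eventually.of_forall fun x => (integral_Iic_pos x).le
    · filter_upwards [Filter.Iic_mem_atBot (-2 : ℝ)] with x hx
      have hb : (∫ t in Set.Iic x, Real.exp (-t ^ 2 / 2)) ≤ ∫ t in Set.Iic x, Real.exp t := by
        refine setIntegral_mono_on integrable_gaussK.integrableOn
          (integrableOn_exp_Iic x) measurableSet_Iic ?_
        intro s hs
        have hs' : s ≤ -2 := le_trans hs hx
        apply Real.exp_le_exp.2
        nlinarith
      calc (∫ t in Set.Iic x, Real.exp (-t ^ 2 / 2)) ≤ ∫ t in Set.Iic x, Real.exp t := hb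
        _ = Real.exp x := integral_exp_Iic x
  have : Tendsto (fun x : ℝ => 1 - (1 / Real.sqrt (2 * Real.pi))
      * ∫ t in Set.Iic x, Real.exp (-t ^ 2 / 2)) atBot (𝓝 (1 - (1 / Real.sqrt (2 * Real.pi)) * 0)) :=
    tendsto_const_nhds.sub (tendsto_const_nhds.mul key)
  simp only [mul_zero, sub_zero] at this
  refine this.congr fun x => (gaussQ_eq x).symm
  
/-- Proposition 2, part 2: with `P_e = Q(t)`, `μ = 2t²`, `σ = 2t`,
`Q((log(1 − P_e) − log(P_e) − μ)/σ) → 1` as `t → +∞`. -/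
theorem gaussQ_correct_prob_tendsto_one :
    Tendsto (fun t : ℝ =>
        gaussQ ((Real.log (1 - gaussQ t) - Real.log (gaussQ t) - 2 * t ^ 2) / (2 * t)))
      atTop (𝓝 1) := by
  have harg : Tendsto (fun t : ℝ =>
      (Real.log (1 - gaussQ t) - Real.log (gaussQ t) - 2 * t ^ 2) / (2 * t)) atTop atBot := by
    have hg : Tendsto (fun t : ℝ => -t / 2) atTop atBot := by
      have h1 : Tendsto (fun t : ℝ => t / 2) atTop atTop :=
        tendsto_id.atTop_div_const (by norm_num)
      have := tendsto_neg_atTop_atBot.comp h1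
      refine this.congr fun t => by simp only [Function.comp_apply]; ring
    refine tendsto_atBot_mono' atTop ?_ hg
    · filter_upwards [Filter.eventually_ge_atTop (4 : ℝ)] with t ht
      have ht0 : (0:ℝ) < t := by linarith
      -- log (1 - gaussQ t) ≤ 0
      have hQpos := gaussQ_pos t
      have hQlt := gaussQ_lt_one t
      have hlog1 : Real.log (1 - gaussQ t) ≤ 0 :=
        Real.log_nonpos (by linarith) (by linarith)
      -- log (gaussQ t) ≥ -t^2
      have hlow := gaussQ_lower t (by linarith)
      have hlog2 : -t ^ 2 ≤ Real.log (gaussQ t) := by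
        have h1 : Real.log ((1 / Real.sqrt (2 * Real.pi)) * Real.exp (-(t + 1) ^ 2 / 2))
            ≤ Real.log (gaussQ t) :=
          Real.log_le_log (by positivity) hlow
        have h2 : Real.log ((1 / Real.sqrt (2 * Real.pi)) * Real.exp (-(t + 1) ^ 2 / 2))
            = -Real.log (Real.sqrt (2 * Real.pi)) + (-(t + 1) ^ 2 / 2) := by
          rw [Real.log_mul (by positivity) (Real.exp_ne_zero _), Real.log_exp, one_div,
            Real.log_inv]
        have h3 : Real.log (Real.sqrt (2 * Real.pi)) ≤ Real.sqrt (2 * Real.pi) - 1 :=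
          Real.log_le_sub_one_of_pos sqrt_two_pi_pos
        have h4 : Real.sqrt (2 * Real.pi) ≤ 3 := by
          rw [show (3:ℝ) = Real.sqrt 9 by rw [show (9:ℝ) = 3^2 by norm_num, Real.sqrt_sq]; norm_num]
          apply Real.sqrt_le_sqrt
          nlinarith [Real.pi_lt_d2]
        have : -t ^ 2 ≤ -Real.log (Real.sqrt (2 * Real.pi)) + (-(t + 1) ^ 2 / 2) := by
          nlinarith
        linarith [h1, h2 ▸ this]
      -- conclude
      rw [div_le_div_iff₀ (by linarith) (by norm_num : (0:ℝ) < 2)]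
      nlinarith
  exact gaussQ_tendsto_one_atBot.comp harg
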